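/- Let H be a finitely generated group with finite generating set Y, and let G be a non-abelian finitely generated group with finite palindromic width k = pw(G, X) with respect to a finite generating set X. Then there exists c ∈ G (possibly c = 1) such that every element of the subgroup H' ≀ G of the restricted regular wreath product H ≀ G — namely the subgroup consisting of all pairs (f, a) where a ∈ G and f : G → H is a finitely supported function taking values in the derived subgroup [H, H] — is a product of at most k + 1 palindromes with respect to the generating set of H ≀ G consisting of the canonical copies of X ∪ {c} and of Y. -/

import Mathlib

open Function

section WreathDefs

variable (G A : Type*) [Group G] [Group A]

/-- The subgroup of finitely supported functions `A → G` (pointwise operations). -/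
def restrictedBase : Subgroup (A → G) where
  carrier := {f | (Function.mulSupport f).Finite}
  one_mem' := by simp [Function.mulSupport_one]
  mul_mem' := fun hf hg => (hf.union hg).subset (Function.mulSupport_mul _ _)
  inv_mem' := fun hf => by simpa [Function.mulSupport_inv] using hf

variable {G A}

lemma shift_mem (a : A) (f : restrictedBase G A) :
    (fun x => (f : A → G) (a * x)) ∈ restrictedBase G A := by
  have h : Function.mulSupport (fun x => (f : A → G) (a * x)) =
      (fun x : A => a * x) ⁻¹' Function.mulSupport (f : A → G) :=
    Function.mulSupport_comp_eq_preimage _ _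
  show (Function.mulSupport _).Finite
  rw [h]
  exact f.2.preimage (mul_right_injective a).injOn

/-- The translation automorphism of the restricted base, `(a • f) x = f (a⁻¹ * x)`. -/
noncomputable def shiftEquiv (a : A) : restrictedBase G A ≃* restrictedBase G A where
  toFun f := ⟨fun x => (f : A → G) (a⁻¹ * x), shift_mem a⁻¹ f⟩
  invFun f := ⟨fun x => (f : A → G) (a * x), shift_mem a f⟩
  left_inv f := by ext x; simp
  right_inv f := by ext x; simp
  map_mul' f g := by ext x; simp

variable (G A)

/-- The translation action of `A` on finitely supported functions `A → G`. -/
noncomputable def wreathAction : A →* MulAut (restrictedBase G A) where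
  toFun a := shiftEquiv a
  map_one' := by ext f x; simp [shiftEquiv]
  map_mul' a b := by ext f x; simp [shiftEquiv, mul_assoc]

/-- The restricted regular wreath product `G ≀ A`. -/
noncomputable abbrev Wreath := restrictedBase G A ⋊[wreathAction G A] A

variable {G A}

/-- The finitely supported function equal to `g` at `1` and trivial elsewhere. -/
noncomputable def atOne (g : G) : restrictedBase G A :=
  letI := Classical.decEq A
  ⟨fun x => if x = 1 then g else 1, by
    apply Set.Finite.subset (Set.finite_singleton (1 : A))
    intro x hx
    simp only [Function.mem_mulSupport] at hx
    by_contra hx1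
    exact hx (if_neg (by simpa using hx1))⟩

/-- The natural generating set of `G ≀ A` built from generating sets of the factors. -/
noncomputable def wreathGens (XB : Set G) (XA : Set A) : Set (Wreath G A) :=
  ((fun g => SemidirectProduct.inl (atOne g)) '' XB) ∪ (SemidirectProduct.inr '' XA)

end WreathDefs

section Palindromes

variable {W : Type*} [Group W]

/-- `g` is a palindrome with respect to `S`: it is the product of a word over `S`
(entries in `S ∪ S⁻¹`) which reads the same forwards and backwards. -/
def IsPalindrome (S : Set W) (g : W) : Prop :=
  ∃ l : List W, (∀ x ∈ l, x ∈ S ∪ S⁻¹) ∧ l.reverse = l ∧ l.prod = g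

/-- `g` is a product of at most `n` palindromes with respect to `S`. -/
def ProdOfPal (S : Set W) (n : ℕ) (g : W) : Prop :=
  ∃ l : List W, l.length ≤ n ∧ (∀ p ∈ l, IsPalindrome S p) ∧ l.prod = g

/-- The palindromic width of a group with respect to `S` (`⊤` if infinite). -/
noncomputable def palWidth (S : Set W) : ℕ∞ :=
  sInf {n : ℕ∞ | ∃ m : ℕ, n = (m : ℕ∞) ∧ ∀ g : W, ProdOfPal S m g}

/-- The word length of `g` with respect to `S`. -/
noncomputable def wordLength (S : Set W) (g : W) : ℕ :=
  sInf {n : ℕ | ∃ l : List W, l.length = n ∧ (∀ x ∈ l, x ∈ S ∪ S⁻¹) ∧ l.prod = g}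

end Palindromes

section Aux
open MulOpposite

variable {W : Type*} [Group W]

/-- Pairs `(prod w, prod (reverse w))` over words `w` in `S`. -/
def palPairs (S : Set W) : Subgroup (W × Wᵐᵒᵖ) :=
  Subgroup.closure ((fun s => (s, op s)) '' S)

lemma mem_palPairs_of_mem {S : Set W} {s : W} (hs : s ∈ S) : (s, op s) ∈ palPairs S :=
  Subgroup.subset_closure ⟨s, hs, rfl⟩

lemma letter_inv {S : Set W} {x : W} (hx : x ∈ S ∪ S⁻¹) : x⁻¹ ∈ S ∪ S⁻¹ := by
  rcases hx with h | h
  · exact Or.inr (by simpa using h)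
  · exact Or.inl (by simpa using h)

lemma exists_word_of_mem_palPairs {S : Set W} {pq : W × Wᵐᵒᵖ} (h : pq ∈ palPairs S) :
    ∃ l : List W, (∀ x ∈ l, x ∈ S ∪ S⁻¹) ∧ l.prod = pq.1 ∧ l.reverse.prod = unop pq.2 := by
  refine Subgroup.closure_induction
    (p := fun t _ => ∃ l : List W, (∀ x ∈ l, x ∈ S ∪ S⁻¹) ∧ l.prod = t.1 ∧ l.reverse.prod = unop t.2)
    ?_ ?_ ?_ ?_ h
  · rintro t ⟨s, hs, rfl⟩
    exact ⟨[s], by simpa using Or.inl hs, by simp, by simp⟩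
  · exact ⟨[], by simp, by simp, by simp⟩
  · rintro x y _ _ ⟨l, hl, hp, hr⟩ ⟨l', hl', hp', hr'⟩
    refine ⟨l ++ l', ?_, ?_, ?_⟩
    · intro x hx; rcases List.mem_append.mp hx with h | h
      exacts [hl x h, hl' x h]
    · simp [List.prod_append, hp, hp']
    · simp [List.reverse_append, List.prod_append, hr, hr', unop_mul]
  · rintro x _ ⟨l, hl, hp, hr⟩
    refine ⟨(l.map (fun y => y⁻¹)).reverse, ?_, ?_, ?_⟩
    · intro x hx
      simp only [List.mem_reverse, List.mem_map] at hx
      obtain ⟨y, hy, rfl⟩ := hx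
      exact letter_inv (hl y hy)
    · rw [← List.prod_inv_reverse, hp]; rfl
    · rw [List.reverse_reverse]
      have : (l.map (fun y => y⁻¹)).prod = (l.reverse.prod)⁻¹ := by
        rw [List.prod_inv_reverse, List.map_reverse, List.reverse_reverse]
      rw [this, hr]; rfl

lemma isPalindrome_of_mem_palPairs {S : Set W} {p q : W} (h : (p, op q) ∈ palPairs S) :
    IsPalindrome S (p * q) := by
  obtain ⟨l, hl, hp, hr⟩ := exists_word_of_mem_palPairs h
  refine ⟨l ++ l.reverse, ?_, ?_, ?_⟩
  · intro x hx; rcases List.mem_append.mp hx with h | h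
    exacts [hl x h, hl x (List.mem_reverse.mp h)]
  · simp [List.reverse_append]
  · simp only [List.prod_append, hp, hr]; rw [unop_op]

lemma palPairs_forall {G : Type*} [Group G] (j : G →* W) {T : Set G}
    (hT : Subgroup.closure T = ⊤) {S : Set W} (hj : ∀ t ∈ T, j t ∈ S) :
    ∀ g : G, ∃ g' : G, (j g, op (j g')) ∈ palPairs S := by
  intro g
  have hg : g ∈ Subgroup.closure T := by rw [hT]; trivial
  refine Subgroup.closure_induction
    (p := fun g _ => ∃ g' : G, (j g, op (j g')) ∈ palPairs S) ?_ ?_ ?_ ?_ hg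
  · intro t ht; exact ⟨t, mem_palPairs_of_mem (hj t ht)⟩
  · exact ⟨1, by convert (palPairs S).one_mem using 1; simp⟩
  · rintro x y _ _ ⟨x', hx⟩ ⟨y', hy⟩
    refine ⟨y' * x', ?_⟩
    have := mul_mem hx hy
    simpa [Prod.mk_mul_mk, ← op_mul, ← map_mul] using this
  · rintro x _ ⟨x', hx⟩
    refine ⟨x'⁻¹, ?_⟩
    have := inv_mem hx
    simpa [Prod.inv_mk, ← op_inv, ← map_inv] using this

lemma exists_good_c {G : Type*} [Group G] {X : Set G} (hX : Subgroup.closure X = ⊤)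
    (hna : ∃ a b : G, a * b ≠ b * a) :
    ∃ c z : G, z ≠ 1 ∧ ((1 : G), op z) ∈ palPairs (X ∪ {c}) := by
  by_contra hcon
  push_neg at hcon
  have hall : ∀ g : G, ∃ g' : G, (g, op g') ∈ palPairs X :=
    palPairs_forall (MonoidHom.id G) hX (fun t ht => ht)
  have hmono : ∀ c : G, palPairs X ≤ palPairs (X ∪ {c}) :=
    fun c => Subgroup.closure_mono (Set.image_mono Set.subset_union_left)
  have huniq : ∀ (c g g₁ g₂ : G), (g, op g₁) ∈ palPairs (X ∪ {c}) →
      (g, op g₂) ∈ palPairs (X ∪ {c}) → g₁ = g₂ := by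
    intro c g g₁ g₂ h1 h2
    have hmem : ((1 : G), op (g₂ * g₁⁻¹)) ∈ palPairs (X ∪ {c}) := by
      have := mul_mem (inv_mem h1) h2
      simpa [Prod.inv_mk, Prod.mk_mul_mk, ← op_inv, ← op_mul] using this
    by_contra hne
    exact hcon c (g₂ * g₁⁻¹) (fun h => hne (mul_inv_eq_one.mp h).symm) hmem
  have hself : ∀ c : G, (c, op c) ∈ palPairs (X ∪ {c}) :=
    fun c => mem_palPairs_of_mem (Or.inr rfl)
  obtain ⟨a, b, hab⟩ := hna
  obtain ⟨a', ha⟩ := hall a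
  obtain ⟨b', hb⟩ := hall b
  have ha' : a' = a := huniq a a a' a (hmono a ha) (hself a)
  have hb' : b' = b := huniq b b b' b (hmono b hb) (hself b)
  have hmul : (a * b, op (b' * a')) ∈ palPairs X := by
    have := mul_mem ha hb
    simpa [Prod.mk_mul_mk, ← op_mul] using this
  have : b' * a' = a * b := huniq (a * b) (a * b) _ _ (hmono _ hmul) (hself (a * b))
  rw [ha', hb'] at this
  exact hab this.symm

end Aux

section AtOneAux
open MulOpposite

variable {G A : Type*} [Group G] [Group A]

lemma atOne_apply_one (g : G) : ((atOne g : restrictedBase G A) : A → G) 1 = g := by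
  simp [atOne]

lemma atOne_apply_of_ne (g : G) {x : A} (hx : x ≠ 1) :
    ((atOne g : restrictedBase G A) : A → G) x = 1 := by
  simp [atOne, hx]

lemma restrictedBase_mul_apply (f g : restrictedBase G A) (x : A) :
    ((f * g : restrictedBase G A) : A → G) x = (f : A → G) x * (g : A → G) x := rfl

lemma restrictedBase_inv_apply (f : restrictedBase G A) (x : A) :
    ((f⁻¹ : restrictedBase G A) : A → G) x = ((f : A → G) x)⁻¹ := rfl

/-- `atOne` as a monoid hom. -/
noncomputable def atOneHom : G →* restrictedBase G A where
  toFun := atOne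
  map_one' := by
    ext x
    by_cases hx : x = 1
    · subst hx; rw [atOne_apply_one]; rfl
    · rw [atOne_apply_of_ne _ hx]; rfl
  map_mul' g h := by
    ext x
    rw [restrictedBase_mul_apply]
    by_cases hx : x = 1
    · subst hx; rw [atOne_apply_one, atOne_apply_one, atOne_apply_one]
    · rw [atOne_apply_of_ne _ hx, atOne_apply_of_ne _ hx, atOne_apply_of_ne _ hx, one_mul]

@[simp] lemma atOneHom_apply (g : G) : (atOneHom g : restrictedBase G A) = atOne g := rfl

lemma shift_apply (a : A) (f : restrictedBase G A) (x : A) :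
    ((wreathAction G A a f : restrictedBase G A) : A → G) x = (f : A → G) (a⁻¹ * x) := rfl

end AtOneAux

open scoped commutatorElement

/-- Let `H` be a finitely generated group with finite generating set `Y` and
`G` a non-abelian finitely generated group with palindromic width `k = pw(G, X)` for a
finite generating set `X`. Then there is `c ∈ G` (possibly `c = 1`) such that every
element of `H' ≀ G` — i.e. every element `w` of `H ≀ G` whose base component takes values
in `[H, H]` — is a product of at most `k + 1` palindromes with respect to the canonical
copies of `X ∪ {c}` and of `Y`. -/

theorem derived_wreath_palindromes {H G : Type*} [Group H] [Group G]
    (Y : Finset H) (hY : Subgroup.closure (Y : Set H) = ⊤)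
    (X : Finset G) (hX : Subgroup.closure (X : Set G) = ⊤)
    (hna : ∃ a b : G, a * b ≠ b * a)
    (k : ℕ) (hk : palWidth (X : Set G) = (k : ℕ∞)) :
    ∃ c : G, ∀ w : Wreath H G,
      (∀ a : G, (w.left : G → H) a ∈ commutator H) →
      ProdOfPal (wreathGens (Y : Set H) ((X : Set G) ∪ {c})) (k + 1) w := by
  classical
  open MulOpposite in
  obtain ⟨c, z, hz, hzmem⟩ := exists_good_c hX hna
  refine ⟨c, ?_⟩
  set Xc : Set G := (X : Set G) ∪ {c} with hXcdef
  set S : Set (Wreath H G) := wreathGens (Y : Set H) Xc with hSdef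
  set K := palPairs S with hKdef
  have hXcTop : Subgroup.closure Xc = ⊤ :=
    top_unique (hX ▸ Subgroup.closure_mono Set.subset_union_left)
  set inlW : restrictedBase H G →* Wreath H G := SemidirectProduct.inl with hinlW
  set inrW : G →* Wreath H G := SemidirectProduct.inr with hinrW
  have hgenY : ∀ y ∈ (Y : Set H), inlW (atOne y) ∈ S := fun y hy => Or.inl ⟨y, hy, rfl⟩
  have hgenX : ∀ x ∈ Xc, inrW x ∈ S := fun x hx => Or.inr ⟨x, hx, rfl⟩
  have hHp : ∀ h : H, ∃ h' : H, (inlW (atOne h), op (inlW (atOne h'))) ∈ K :=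
    palPairs_forall (inlW.comp atOneHom) hY hgenY
  have hGp : ∀ g : G, ∃ g' : G, (inrW g, op (inrW g')) ∈ K :=
    palPairs_forall inrW hXcTop hgenX
  set Φ : G × Gᵐᵒᵖ →* Wreath H G × (Wreath H G)ᵐᵒᵖ :=
    inrW.prodMap (MonoidHom.op inrW) with hΦdef
  have hΦap : ∀ (g₁ g₂ : G), Φ (g₁, op g₂) = (inrW g₁, op (inrW g₂)) := by
    intro g₁ g₂; rfl
  have hΦ : ∀ pq ∈ palPairs Xc, Φ pq ∈ K := by
    intro pq hpq
    have h1 : Φ pq ∈ (palPairs Xc).map Φ := Subgroup.mem_map_of_mem Φ hpq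
    rw [palPairs, MonoidHom.map_closure] at h1
    refine (Subgroup.closure_le K).mpr ?_ h1
    rintro _ ⟨_, ⟨x, hx, rfl⟩, rfl⟩
    rw [hΦap]
    exact mem_palPairs_of_mem (hgenX x hx)
  have hzK : ((1 : Wreath H G), op (inrW z)) ∈ K := by
    have h1 := hΦ _ hzmem
    rw [hΦap, map_one] at h1
    exact h1
  -- commuting of disjointly supported base elements
  have hdisj : ∀ (n m : restrictedBase H G),
      (∀ x : G, (n : G → H) x = 1 ∨ (m : G → H) x = 1) → n * m = m * n := by
    intro n m hnm
    ext x
    rw [restrictedBase_mul_apply, restrictedBase_mul_apply]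
    rcases hnm x with h | h <;> rw [h] <;> simp
  -- the key commutator computation
  have hcore : ∀ u v : H,
      ((inlW (atOne ⁅u, v⁆) : Wreath H G), op (1 : Wreath H G)) ∈ K := by
    intro u v
    obtain ⟨u', hu⟩ := hHp u
    obtain ⟨v', hv⟩ := hHp v
    set x : Wreath H G := inlW (atOne u') with hx
    set Pv : Wreath H G := inrW z⁻¹ * inlW (atOne v') * inrW z with hPvdef
    have hB : (inlW (atOne v), op Pv) ∈ K := by
      have h1 := mul_mem (mul_mem hzK hv) (inv_mem hzK)
      have h2 : ((1 : Wreath H G), op (inrW z)) * (inlW (atOne v), op (inlW (atOne v')))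
          * ((1 : Wreath H G), op (inrW z))⁻¹ = (inlW (atOne v), op Pv) := by
        rw [Prod.inv_mk, Prod.mk_mul_mk, Prod.mk_mul_mk]
        refine Prod.ext ?_ ?_
        · show (1 : Wreath H G) * inlW (atOne v) * (1 : Wreath H G)⁻¹ = inlW (atOne v)
          simp
        · show op (inrW z) * op (inlW (atOne v')) * (op (inrW z))⁻¹ = op Pv
          rw [← op_inv, ← op_mul, ← op_mul]
          congr 1
          rw [hPvdef, map_inv, mul_assoc]
      rw [h2] at h1
      exact h1
    have hPur : Pv = inlW (wreathAction H G z⁻¹ (atOne v')) := by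
      rw [hPvdef, hinlW, hinrW, SemidirectProduct.inl_aut, inv_inv]
    have hcm : Commute x Pv := by
      rw [hPur, hx]
      have h3 : atOne u' * (wreathAction H G z⁻¹ (atOne v'))
          = (wreathAction H G z⁻¹ (atOne v')) * atOne u' := by
        apply hdisj
        intro t
        by_cases ht : t = 1
        · right; subst ht; rw [shift_apply, inv_inv, mul_one]; exact atOne_apply_of_ne _ hz
        · left; exact atOne_apply_of_ne _ ht
      exact Commute.map (by exact h3) inlW
    have hκ := mul_mem (mul_mem (mul_mem hu hB) (inv_mem hu)) (inv_mem hB)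
    have heq : (inlW (atOne u), op x) * (inlW (atOne v), op Pv)
        * (inlW (atOne u), op x)⁻¹ * (inlW (atOne v), op Pv)⁻¹
        = ((inlW (atOne ⁅u, v⁆) : Wreath H G), op (1 : Wreath H G)) := by
      rw [Prod.inv_mk, Prod.inv_mk, Prod.mk_mul_mk, Prod.mk_mul_mk, Prod.mk_mul_mk]
      refine Prod.ext ?_ ?_
      · show inlW (atOne u) * inlW (atOne v) * (inlW (atOne u))⁻¹ * (inlW (atOne v))⁻¹
            = inlW (atOne ⁅u, v⁆)
        simp only [← atOneHom_apply, ← map_inv, ← map_mul]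
        rw [commutatorElement_def]
      · show op x * op Pv * (op x)⁻¹ * (op Pv)⁻¹ = op (1 : Wreath H G)
        have hcm' : Commute (op x) (op Pv) := by
          show op x * op Pv = op Pv * op x
          rw [← op_mul, ← op_mul, hcm.eq]
        rw [op_one, ← commutatorElement_def]
        exact commutatorElement_eq_one_iff_commute.mpr hcm'
    rw [← heq]
    exact hκ
  -- value lemma at arbitrary positions
  have hval : ∀ (b : G) (m : H), m ∈ commutator H →
      ((inrW b * inlW (atOne m) * (inrW b)⁻¹ : Wreath H G), op (1 : Wreath H G)) ∈ K := by
    have hone : ∀ m : H, m ∈ commutator H →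
        ((inlW (atOne m) : Wreath H G), op (1 : Wreath H G)) ∈ K := by
      intro m hm
      rw [commutator_eq_closure] at hm
      refine Subgroup.closure_induction
        (p := fun m _ => ((inlW (atOne m) : Wreath H G), op (1 : Wreath H G)) ∈ K)
        ?_ ?_ ?_ ?_ hm
      · rintro t ⟨u, v, rfl⟩
        exact hcore u v
      · convert (K : Subgroup _).one_mem using 1; simp [← atOneHom_apply]
      · intro m₁ m₂ _ _ h1 h2
        have := mul_mem h1 h2
        simpa [Prod.mk_mul_mk, ← atOneHom_apply, ← map_mul] using this
      · intro m₁ _ h1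
        have := inv_mem h1
        simpa [Prod.inv_mk, ← atOneHom_apply, ← map_inv] using this
    intro b m hm
    obtain ⟨b', hb⟩ := hGp b
    have h1 := mul_mem (mul_mem hb (hone m hm)) (inv_mem hb)
    have h2 : (inrW b, op (inrW b')) * (inlW (atOne m), op (1 : Wreath H G))
        * (inrW b, op (inrW b'))⁻¹
        = ((inrW b * inlW (atOne m) * (inrW b)⁻¹ : Wreath H G), op (1 : Wreath H G)) := by
      rw [Prod.inv_mk, Prod.mk_mul_mk, Prod.mk_mul_mk]
      refine Prod.ext rfl ?_
      show op (inrW b') * op (1 : Wreath H G) * (op (inrW b'))⁻¹ = op 1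
      simp
    rw [h2] at h1
    exact h1
  -- every derived-valued finitely supported function gives a member
  have hbase : ∀ (s : Finset G) (f : restrictedBase H G),
      (∀ a, (f : G → H) a ∈ commutator H) → Function.mulSupport (f : G → H) ⊆ s →
      ((inlW f : Wreath H G), op (1 : Wreath H G)) ∈ K := by
    intro s
    induction s using Finset.induction_on with
    | empty =>
      intro f hf hsupp
      have hf1 : f = 1 := by
        ext t
        by_contra ht
        exact absurd (hsupp ht) (by simp)
      rw [hf1]
      convert (K : Subgroup _).one_mem using 1; simp
    | @insert b t hbt ih =>
      intro f hf hsupp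
      set δ : restrictedBase H G := wreathAction H G b (atOne ((f : G → H) b)) with hδdef
      have hδap : ∀ x : G, (δ : G → H) x = if x = b then (f : G → H) b else 1 := by
        intro x
        rw [hδdef, shift_apply]
        by_cases hxb : x = b
        · subst hxb; rw [if_pos rfl, inv_mul_cancel, atOne_apply_one]
        · rw [if_neg hxb, atOne_apply_of_ne]
          intro hcontra
          exact hxb (by rw [← one_mul x, ← mul_inv_cancel b, mul_assoc, hcontra, mul_one])
      set g' : restrictedBase H G := δ⁻¹ * f with hg'def
      have hg'ap : ∀ x : G, (g' : G → H) x = if x = b then 1 else (f : G → H) x := by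
        intro x
        rw [hg'def, restrictedBase_mul_apply, restrictedBase_inv_apply, hδap]
        by_cases hxb : x = b
        · subst hxb; rw [if_pos rfl, if_pos rfl, inv_mul_cancel]
        · rw [if_neg hxb, if_neg hxb, inv_one, one_mul]
      have hg'val : ∀ a, (g' : G → H) a ∈ commutator H := by
        intro a; rw [hg'ap]
        by_cases hab : a = b
        · rw [if_pos hab]; exact one_mem _
        · rw [if_neg hab]; exact hf a
      have hg'supp : Function.mulSupport (g' : G → H) ⊆ t := by
        intro a ha
        have hane : (g' : G → H) a ≠ 1 := ha
        rw [hg'ap] at hane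
        by_cases hab : a = b
        · rw [if_pos hab] at hane; exact absurd rfl hane
        · rw [if_neg hab] at hane
          have : a ∈ (insert b t : Finset G) := hsupp hane
          rcases Finset.mem_insert.mp this with h | h
          · exact absurd h hab
          · exact h
      have hδK : ((inlW δ : Wreath H G), op (1 : Wreath H G)) ∈ K := by
        have h5 := hval b ((f : G → H) b) (hf b)
        have h6 : inlW δ = inrW b * inlW (atOne ((f : G → H) b)) * (inrW b)⁻¹ := by
          rw [hδdef, hinlW, hinrW, SemidirectProduct.inl_aut, map_inv]
        rw [h6]
        exact h5
      have hg'K := ih g' hg'val hg'supp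
      have hfd : f = δ * g' := by rw [hg'def, ← mul_assoc, mul_inv_cancel, one_mul]
      have := mul_mem hδK hg'K
      rw [Prod.mk_mul_mk, ← map_mul, ← hfd] at this
      simpa using this
  -- the palindromic width of G gives k palindromes for the G-part
  have hGk : ∀ g : G, ProdOfPal (X : Set G) k g := by
    have hTne : ∃ m : ℕ, ∀ g : G, ProdOfPal (X : Set G) m g := by
      by_contra hcon
      push_neg at hcon
      have hempty : {n : ℕ∞ | ∃ m : ℕ, n = (m : ℕ∞) ∧ ∀ g : G, ProdOfPal (X : Set G) m g}
          = ∅ := by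
        ext n
        simp only [Set.mem_setOf_eq, Set.mem_empty_iff_false, iff_false, not_exists]
        rintro m ⟨rfl, hm⟩
        obtain ⟨g, hg⟩ := hcon m
        exact hg (hm g)
      rw [palWidth, hempty, sInf_empty] at hk
      exact (ENat.top_ne_coe k) hk
    obtain ⟨m, hm⟩ := hTne
    have hMne : {m : ℕ | ∀ g : G, ProdOfPal (X : Set G) m g}.Nonempty := ⟨m, hm⟩
    have hmem : ∀ g : G, ProdOfPal (X : Set G)
        (sInf {m : ℕ | ∀ g : G, ProdOfPal (X : Set G) m g}) g := Nat.sInf_mem hMne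
    have h1 : palWidth (X : Set G)
        ≤ ((sInf {m : ℕ | ∀ g : G, ProdOfPal (X : Set G) m g} : ℕ) : ℕ∞) :=
      sInf_le ⟨_, rfl, hmem⟩
    have h2 : ((sInf {m : ℕ | ∀ g : G, ProdOfPal (X : Set G) m g} : ℕ) : ℕ∞)
        ≤ palWidth (X : Set G) := by
      apply le_sInf
      rintro n' ⟨m', rfl, hm'⟩
      exact_mod_cast Nat.sInf_le (show m' ∈ {m : ℕ | ∀ g : G, ProdOfPal (X : Set G) m g}
        from hm')
    rw [hk] at h1 h2
    have h4 : sInf {m : ℕ | ∀ g : G, ProdOfPal (X : Set G) m g} = k := by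
      exact_mod_cast le_antisymm h2 h1
    rw [← h4]
    exact hmem
  -- lifting palindromes of G
  have hlift : ∀ p : G, IsPalindrome (X : Set G) p → IsPalindrome S (inrW p) := by
    rintro p ⟨l, hl, hrev, hprod⟩
    refine ⟨l.map inrW, ?_, ?_, ?_⟩
    · intro x hx
      obtain ⟨y, hy, rfl⟩ := List.mem_map.mp hx
      rcases hl y hy with h | h
      · exact Or.inl (hgenX y (Or.inl h))
      · refine Or.inr ?_
        rw [Set.mem_inv] at h ⊢
        rw [← map_inv]
        exact hgenX y⁻¹ (Or.inl h)
    · rw [← List.map_reverse, hrev]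
    · rw [← hprod]
      exact (List.prod_hom l inrW)
  -- assembly
  intro w hw
  set f : restrictedBase H G := w.left with hfdef
  have hfin : (Function.mulSupport (f : G → H)).Finite := f.2
  have hfK : ((inlW f : Wreath H G), op (1 : Wreath H G)) ∈ K :=
    hbase hfin.toFinset f hw (by intro x hx; exact (Set.Finite.mem_toFinset hfin).mpr hx)
  have hpal1 : IsPalindrome S (inlW f) := by
    have := isPalindrome_of_mem_palPairs hfK
    rwa [mul_one] at this
  obtain ⟨l, hlen, hlp, hlprod⟩ := hGk w.right
  refine ⟨inlW f :: l.map inrW, ?_, ?_, ?_⟩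
  · simpa using Nat.add_le_add_right hlen 1
  · intro p hp
    rcases List.mem_cons.mp hp with h | h
    · rw [h]; exact hpal1
    · obtain ⟨q, hq, rfl⟩ := List.mem_map.mp h
      exact hlift q (hlp q hq)
  · rw [List.prod_cons, List.prod_hom l inrW, hlprod]
    exact SemidirectProduct.inl_left_mul_inr_right w
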